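/- arXiv:0903.1030 — 4 statements merged into one kernel-verified Lean document; each statement's English description precedes it below -/
import Mathlib

section
/- A binomial f = X^u − X^v ∈ I_A with u ≠ v is an indispensable binomial of I_A if and only if every A-homogeneous generating set of I_A contains a nonzero scalar multiple of f. -/
open MvPolynomial

/-- The monomial `X^u = ∏ i, X i ^ u i` in `k[X_1, …, X_r]`. -/
noncomputable def mon (k : Type*) [Field k] {r : ℕ} (u : Fin r → ℕ) :
    MvPolynomial (Fin r) k :=
  ∏ i, X i ^ u i

/-- `S` is a binomial generating set of `IA`: a set of pure-difference binomials
`X^u - X^v` with `π u = π v` generating `IA` as an ideal. -/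
def IsBinomGenSet (k : Type*) [Field k] {r : ℕ} {A : Type*} [AddCancelCommMonoid A]
    (π : (Fin r → ℕ) → A) (IA : Ideal (MvPolynomial (Fin r) k))
    (S : Set (MvPolynomial (Fin r) k)) : Prop :=
  (∀ f ∈ S, ∃ u v : Fin r → ℕ, π u = π v ∧ f = mon k u - mon k v) ∧ Ideal.span S = IA

/-- A minimal binomial generating set: no proper subset generates `IA`. -/
def IsMinBinomGenSet (k : Type*) [Field k] {r : ℕ} {A : Type*} [AddCancelCommMonoid A]
    (π : (Fin r → ℕ) → A) (IA : Ideal (MvPolynomial (Fin r) k))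
    (S : Set (MvPolynomial (Fin r) k)) : Prop :=
  IsBinomGenSet k π IA S ∧ ∀ T, T ⊂ S → Ideal.span T ≠ IA

/-- `f` is an indispensable binomial of `IA`: a binomial `X^u - X^v ∈ IA` with `u ≠ v`
such that every binomial generating set of `IA` contains `f` or `-f`. -/
def IsIndispBinomial (k : Type*) [Field k] {r : ℕ} {A : Type*} [AddCancelCommMonoid A]
    (π : (Fin r → ℕ) → A) (IA : Ideal (MvPolynomial (Fin r) k))
    (f : MvPolynomial (Fin r) k) : Prop :=
  (∃ u v : Fin r → ℕ, u ≠ v ∧ π u = π v ∧ f = mon k u - mon k v) ∧ f ∈ IA ∧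
    ∀ S, IsBinomGenSet k π IA S → f ∈ S ∨ -f ∈ S

/-- `X^u` is an indispensable monomial of `IA`: every binomial generating set of `IA`
contains a binomial `X^u - X^v` or `X^v - X^u` for some `v`. -/
def IsIndispMonomial (k : Type*) [Field k] {r : ℕ} {A : Type*} [AddCancelCommMonoid A]
    (π : (Fin r → ℕ) → A) (IA : Ideal (MvPolynomial (Fin r) k))
    (u : Fin r → ℕ) : Prop :=
  ∀ S, IsBinomGenSet k π IA S →
    ∃ f ∈ S, ∃ v : Fin r → ℕ, f = mon k u - mon k v ∨ f = mon k v - mon k u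

/-- `S` is an `A`-homogeneous generating set of `IA`: a set of `A`-homogeneous
polynomials generating `IA` as an ideal. -/
def IsHomogGenSet (k : Type*) [Field k] {r : ℕ} {A : Type*} [AddCancelCommMonoid A]
    (π : (Fin r → ℕ) → A) (IA : Ideal (MvPolynomial (Fin r) k))
    (S : Set (MvPolynomial (Fin r) k)) : Prop :=
  (∀ f ∈ S, ∃ b : A, ∀ d ∈ f.support, π ⇑d = b) ∧ Ideal.span S = IA

/-- A minimal `A`-homogeneous generating set: no proper subset generates `IA`. -/
def IsMinHomogGenSet (k : Type*) [Field k] {r : ℕ} {A : Type*} [AddCancelCommMonoid A]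
    (π : (Fin r → ℕ) → A) (IA : Ideal (MvPolynomial (Fin r) k))
    (S : Set (MvPolynomial (Fin r) k)) : Prop :=
  IsHomogGenSet k π IA S ∧ ∀ T, T ⊂ S → Ideal.span T ≠ IA

/-- `b` is an indispensable `A`-degree of `IA`: every binomial generating set of `IA`
contains a binomial both of whose monomials have `A`-degree `b`, and every minimal
binomial generating set contains exactly one such binomial. -/
def IsIndispDegree (k : Type*) [Field k] {r : ℕ} {A : Type*} [AddCancelCommMonoid A]
    (π : (Fin r → ℕ) → A) (IA : Ideal (MvPolynomial (Fin r) k)) (b : A) : Prop :=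
  (∀ S, IsBinomGenSet k π IA S →
    ∃ f ∈ S, ∃ u v : Fin r → ℕ, π u = b ∧ π v = b ∧ f = mon k u - mon k v) ∧
  ∀ S, IsMinBinomGenSet k π IA S →
    ∃! f, f ∈ S ∧ ∃ u v : Fin r → ℕ, π u = b ∧ π v = b ∧ f = mon k u - mon k v


noncomputable def sg {k : Type*} [Field k] {A : Type*} [AddCancelCommMonoid A]
    (x : A) (c : k) : AddMonoidAlgebra k A := AddMonoidAlgebra.single x c

section Aux
variable {k : Type*} [Field k] {A : Type*} [AddCancelCommMonoid A] {r : ℕ}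

lemma sg_mul (x y : A) (c d : k) : sg x c * sg y d = sg (x + y) (c * d) :=
  AddMonoidAlgebra.single_mul_single _ _ _ _

lemma sg_pow (x : A) (c : k) (n : ℕ) : sg x c ^ n = sg (n • x) (c ^ n) :=
  AddMonoidAlgebra.single_pow x c n

lemma sg_eq_zero {x : A} {c : k} (h : sg x c = 0) : c = 0 :=
  AddMonoidAlgebra.single_eq_zero.mp h

lemma sg_sum {ι : Type*} (t : Finset ι) (b : A) (f : ι → k) :
    ∑ i ∈ t, sg b (f i) = sg b (∑ i ∈ t, f i) := by
  classical
  induction t using Finset.cons_induction with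
  | empty => simp [sg]
  | cons a s ha ih =>
      rw [Finset.sum_cons, Finset.sum_cons, ih]
      exact (AddMonoidAlgebra.single_add _ _ _).symm

lemma sprod {ι : Type*} (s : Finset ι) (c : ι → A) :
    (∏ i ∈ s, sg (c i) (1:k)) = sg (∑ i ∈ s, c i) 1 := by
  classical
  induction s using Finset.cons_induction with
  | empty => simp [sg, AddMonoidAlgebra.one_def]
  | cons a s ha ih =>
      rw [Finset.prod_cons, ih, Finset.sum_cons, sg_mul, one_mul]

noncomputable def phi (k : Type*) [Field k] {r : ℕ} {A : Type*} [AddCancelCommMonoid A]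
    (a : Fin r → A) : MvPolynomial (Fin r) k →ₐ[k] AddMonoidAlgebra k A :=
  aeval fun i => sg (a i) 1

variable (a : Fin r → A) (π : (Fin r → ℕ) → A)

lemma phi_monomial (hπ : ∀ u, π u = ∑ i, u i • a i) (d : Fin r →₀ ℕ) (c : k) :
    phi k a (monomial d c) = sg (π ⇑d) c := by
  rw [phi, aeval_monomial]
  have h1 : (d.prod fun i n => sg (a i) (1:k) ^ n)
      = sg (∑ i ∈ d.support, d i • a i) 1 := by
    rw [Finsupp.prod, ← sprod]
    refine Finset.prod_congr rfl fun i _ => ?_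
    rw [sg_pow, one_pow]
  rw [h1]
  have h2 : (∑ i ∈ d.support, d i • a i) = π ⇑d := by
    rw [hπ]
    refine Finset.sum_subset (Finset.subset_univ _) fun i _ hi => ?_
    simp only [Finsupp.mem_support_iff, ne_eq, not_not] at hi
    simp [hi]
  rw [h2]
  have h3 : (algebraMap k (AddMonoidAlgebra k A)) c = sg 0 c := rfl
  rw [h3, sg_mul, zero_add, mul_one]

lemma phi_homog (hπ : ∀ u, π u = ∑ i, u i • a i) (s : MvPolynomial (Fin r) k) (b' : A)
    (hhom : ∀ d ∈ s.support, π ⇑d = b') :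
    phi k a s = sg b' (∑ d ∈ s.support, coeff d s) := by
  conv_lhs => rw [as_sum s]
  rw [map_sum, ← sg_sum]
  refine Finset.sum_congr rfl fun d hd => ?_
  rw [phi_monomial a π hπ, hhom d hd]

lemma coe_F (u : Fin r → ℕ) : ⇑(Finsupp.equivFunOnFinite.symm u) = u :=
  Finsupp.equivFunOnFinite.apply_symm_apply u

lemma F_coe (d : Fin r →₀ ℕ) : Finsupp.equivFunOnFinite.symm ⇑d = d :=
  Finsupp.equivFunOnFinite.symm_apply_apply d

lemma mon_eq (u : Fin r → ℕ) :
    mon k u = monomial (Finsupp.equivFunOnFinite.symm u) (1 : k) := by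
  rw [mon, ← prod_X_pow_eq_monomial]
  refine (Finset.prod_subset (Finset.subset_univ _) ?_).symm
  intro i _ hi
  simp only [Finsupp.mem_support_iff, ne_eq, not_not] at hi
  rw [show (Finsupp.equivFunOnFinite.symm u) i = u i from rfl] at hi
  rw [hi, pow_zero]

lemma mon_coe (d : Fin r →₀ ℕ) : mon k ⇑d = monomial d (1 : k) := by
  rw [mon_eq, F_coe]

lemma binomial_eq {p q s t : Fin r →₀ ℕ} (hpq : p ≠ q) (hst : s ≠ t)
    (h : monomial p (1:k) - monomial q 1 = monomial s 1 - monomial t 1) :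
    (p = s ∧ q = t) ∨ (p = t ∧ q = s) := by
  have hs : ((if p = s then (1:k) else 0) - if q = s then 1 else 0) = 1 := by
    have := congrArg (coeff s) h
    simpa [coeff_sub, coeff_monomial, Ne.symm hst] using this
  have ht : ((if p = t then (1:k) else 0) - if q = t then 1 else 0) = -1 := by
    have := congrArg (coeff t) h
    simpa [coeff_sub, coeff_monomial, hst] using this
  by_cases hps : p = s
  · left
    refine ⟨hps, ?_⟩
    subst hps
    rw [if_neg hst] at ht
    by_cases hqt : q = t
    · exact hqt
    · rw [if_neg hqt] at ht; norm_num at ht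
  · right
    rw [if_neg hps] at hs
    by_cases hqs : q = s
    · refine ⟨?_, hqs⟩
      subst hqs
      rw [if_neg hst] at ht
      by_cases hpt : p = t
      · exact hpt
      · rw [if_neg hpt] at ht; norm_num at ht
    · rw [if_neg hqs] at hs; norm_num at hs

end Aux


section Mid
variable {k : Type*} [Field k] {r : ℕ}

lemma homog_decomp (s : MvPolynomial (Fin r) k)
    (hsum : ∑ d ∈ s.support, coeff d s = 0)
    (M : Ideal (MvPolynomial (Fin r) k))
    (hM : ∀ d ∈ s.support, ∀ e ∈ s.support, monomial d (1:k) - monomial e 1 ∈ M) :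
    s ∈ M := by
  rcases eq_or_ne s 0 with rfl | hs0
  · exact M.zero_mem
  obtain ⟨d₀, hd₀⟩ : s.support.Nonempty := by
    rw [Finset.nonempty_iff_ne_empty, Ne, MvPolynomial.support_eq_empty]; exact hs0
  have key : s = ∑ d ∈ s.support, C (coeff d s) * (monomial d 1 - monomial d₀ 1) := by
    have e1 : ∀ d : Fin r →₀ ℕ, C (coeff d s) * (monomial d (1:k) - monomial d₀ 1)
        = monomial d (coeff d s) - monomial d₀ (coeff d s) := fun d => by
      rw [mul_sub, C_mul_monomial, C_mul_monomial, mul_one]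
    calc s = (∑ d ∈ s.support, monomial d (coeff d s))
            - monomial d₀ (∑ d ∈ s.support, coeff d s) := by
            rw [hsum, map_zero, sub_zero, ← as_sum]
      _ = ∑ d ∈ s.support, (monomial d (coeff d s) - monomial d₀ (coeff d s)) := by
            rw [Finset.sum_sub_distrib, map_sum]
      _ = _ := by
            refine Finset.sum_congr rfl fun d _ => (e1 d).symm
  rw [key]
  exact Ideal.sum_mem _ fun d hd => Ideal.mul_mem_left _ _ (hM d hd d₀ hd₀)

lemma shape (s : MvPolynomial (Fin r) k) (u' v' : Fin r →₀ ℕ) (hne : u' ≠ v')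
    (hsupp : s.support ⊆ {u', v'})
    (hsum : ∑ d ∈ s.support, coeff d s = 0) :
    s = (coeff u' s) • (monomial u' (1:k) - monomial v' 1) := by
  have hv : coeff v' s = - coeff u' s := by
    have h2 : ∑ d ∈ ({u', v'} : Finset (Fin r →₀ ℕ)), coeff d s = 0 := by
      rw [← Finset.sum_subset hsupp (fun d _ hd => by
        rwa [← MvPolynomial.notMem_support_iff])]
      exact hsum
    rw [Finset.sum_pair hne] at h2
    exact eq_neg_of_add_eq_zero_right h2
  apply MvPolynomial.ext
  intro d
  rw [MvPolynomial.coeff_smul, coeff_sub, coeff_monomial, coeff_monomial]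
  by_cases hdu : d = u'
  · subst hdu; rw [if_pos rfl, if_neg (Ne.symm hne)]; simp
  · by_cases hdv : d = v'
    · subst hdv; rw [if_neg (fun h => hne h), if_pos rfl, hv]; simp
    · rw [if_neg (fun h => hdu h.symm), if_neg (fun h => hdv h.symm)]
      have : d ∉ s.support := fun h => by
        rcases Finset.mem_insert.mp (hsupp h) with h' | h'
        · exact hdu h'
        · exact hdv (Finset.mem_singleton.mp h')
      rw [MvPolynomial.notMem_support_iff.mp this]; simp

lemma smul_binom_eq (u' v' : Fin r →₀ ℕ) (hne : u' ≠ v') (c : k) (hc : c ≠ 0)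
    (p q : Fin r →₀ ℕ)
    (h : c • (monomial u' (1:k) - monomial v' 1) = monomial p 1 - monomial q 1) :
    (c = 1 ∧ u' = p ∧ v' = q) ∨ (c = -1 ∧ u' = q ∧ v' = p) := by
  have key : ∀ d : Fin r →₀ ℕ,
      c * ((if u' = d then (1:k) else 0) - if v' = d then 1 else 0)
        = (if p = d then (1:k) else 0) - if q = d then 1 else 0 := fun d => by
    have h0 := congrArg (coeff d) h
    simp only [MvPolynomial.coeff_smul, coeff_sub, coeff_monomial, smul_eq_mul] at h0
    exact h0
  have hpq : p ≠ q := by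
    rintro rfl
    have h1 := key u'
    rw [if_pos rfl, if_neg (Ne.symm hne), sub_zero, sub_self, mul_one] at h1
    exact hc h1
  by_cases hup : u' = p
  · have h1 := key p
    rw [if_pos hup, if_pos rfl, if_neg (fun h' => hne (hup.trans h'.symm)),
      if_neg (Ne.symm hpq), sub_zero, mul_one] at h1
    have h2 := key q
    rw [if_neg (fun h' : u' = q => hpq (hup.symm.trans h')), if_neg hpq, if_pos rfl,
      zero_sub, zero_sub, mul_neg] at h2
    by_cases hvq : v' = q
    · exact Or.inl ⟨h1, hup, hvq⟩
    · exfalso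
      rw [if_neg hvq, h1] at h2
      norm_num at h2
  · have h1 := key p
    by_cases hvp : v' = p
    · rw [if_neg hup, if_pos hvp, if_pos rfl, if_neg (Ne.symm hpq), zero_sub, sub_zero,
        mul_neg, mul_one] at h1
      have hc1 : c = -1 := by linear_combination -h1
      have h2 := key q
      rw [if_neg (fun h' : v' = q => hpq (hvp.symm.trans h')), if_neg hpq, if_pos rfl,
        sub_zero, zero_sub] at h2
      by_cases huq : u' = q
      · exact Or.inr ⟨hc1, huq, hvp⟩
      · exfalso
        rw [if_neg huq, hc1] at h2
        norm_num at h2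
    · exfalso
      have := h1
      rw [if_neg hup, if_neg hvp, if_pos rfl, if_neg (Ne.symm hpq), sub_zero, sub_zero,
        mul_zero] at this
      exact zero_ne_one this
end Mid


/-- A binomial `X^u − X^v ∈ I_A` with `u ≠ v` is indispensable if and only if every
`A`-homogeneous generating set of `I_A` contains a nonzero scalar multiple of it. -/
theorem statement_2 {k : Type*} [Field k] {r : ℕ} (hr : 1 ≤ r)
    {A : Type*} [AddCancelCommMonoid A]
    (hred : ∀ x y : A, x + y = 0 → x = 0 ∧ y = 0)
    (a : Fin r → A) (ha : ∀ i, a i ≠ 0)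
    (π : (Fin r → ℕ) → A) (hπ : ∀ u, π u = ∑ i, u i • a i)
    (hgen : ∀ x : A, ∃ u, π u = x)
    (hfib : ∀ x : A, {u : Fin r → ℕ | π u = x}.Finite)
    (IA : Ideal (MvPolynomial (Fin r) k))
    (hIA : IA = Ideal.span {f | ∃ u v : Fin r → ℕ, π u = π v ∧ f = mon k u - mon k v})
    (u v : Fin r → ℕ) (huv : u ≠ v)
    (hmem : mon k u - mon k v ∈ IA) :
    IsIndispBinomial k π IA (mon k u - mon k v) ↔
      ∀ S, IsHomogGenSet k π IA S → ∃ c : k, c ≠ 0 ∧ c • (mon k u - mon k v) ∈ S := by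
  classical
  set B : Set (MvPolynomial (Fin r) k) :=
    {f | ∃ p q : Fin r → ℕ, π p = π q ∧ f = mon k p - mon k q} with hBdef
  set u' : Fin r →₀ ℕ := Finsupp.equivFunOnFinite.symm u with hu'
  set v' : Fin r →₀ ℕ := Finsupp.equivFunOnFinite.symm v with hv'
  have hcu : ⇑u' = u := coe_F u
  have hcv : ⇑v' = v := coe_F v
  have hne' : u' ≠ v' := fun h => huv (by rw [← hcu, ← hcv, h])
  have hmu : mon k u = monomial u' (1:k) := mon_eq u
  have hmv : mon k v = monomial v' (1:k) := mon_eq v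
  have hπu : π ⇑u' = π u := by rw [hcu]
  have hπv : π ⇑v' = π v := by rw [hcv]
  have hBmem : ∀ d e : Fin r →₀ ℕ, π ⇑d = π ⇑e →
      monomial d (1:k) - monomial e 1 ∈ B := fun d e hde =>
    ⟨⇑d, ⇑e, hde, by rw [mon_coe, mon_coe]⟩
  have hBhom : ∀ g ∈ B, ∃ b : A, ∀ d ∈ g.support, π ⇑d = b := by
    rintro g ⟨p, q, hpq, rfl⟩
    refine ⟨π p, fun d hd => ?_⟩
    rw [mon_eq, mon_eq] at hd
    have hcoeff := MvPolynomial.mem_support_iff.mp hd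
    rw [coeff_sub, coeff_monomial, coeff_monomial] at hcoeff
    by_cases h1 : Finsupp.equivFunOnFinite.symm p = d
    · rw [← h1, coe_F]
    · by_cases h2 : Finsupp.equivFunOnFinite.symm q = d
      · rw [← h2, coe_F, hpq]
      · exfalso
        rw [if_neg h1, if_neg h2, sub_zero] at hcoeff
        exact hcoeff rfl
  have hker : ∀ g ∈ IA, phi k a g = 0 := by
    intro g hg
    rw [hIA] at hg
    have hle : Ideal.span B ≤ RingHom.ker (phi k a) := Ideal.span_le.mpr (by
      rintro g' ⟨p, q, hpq, rfl⟩
      have h0 : phi k a (mon k p - mon k q) = 0 := by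
        rw [mon_eq, mon_eq, map_sub, phi_monomial a π hπ, phi_monomial a π hπ,
          coe_F, coe_F, hpq, sub_self]
      simpa [RingHom.mem_ker] using h0)
    exact RingHom.mem_ker.mp (hle hg)
  have hsum0 : ∀ s ∈ IA, ∀ b' : A, (∀ d ∈ s.support, π ⇑d = b') →
      ∑ d ∈ s.support, coeff d s = 0 := fun s hs b' hhom =>
    sg_eq_zero (x := b') (by rw [← phi_homog a π hπ s b' hhom]; exact hker s hs)
  constructor
  · intro hind S hS
    obtain ⟨u₀, v₀, hne₀, hπ₀, hf₀⟩ := hind.1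
    have hf₀' : monomial u' (1:k) - monomial v' 1
        = monomial (Finsupp.equivFunOnFinite.symm u₀) 1
          - monomial (Finsupp.equivFunOnFinite.symm v₀) 1 := by
      rw [← mon_eq u₀, ← mon_eq v₀, ← hmu, ← hmv]; exact hf₀
    have hne₀' : Finsupp.equivFunOnFinite.symm u₀ ≠ Finsupp.equivFunOnFinite.symm v₀ :=
      fun h => hne₀ (Finsupp.equivFunOnFinite.symm.injective h)
    have hπuv : π u = π v := by
      rcases binomial_eq hne' hne₀' hf₀' with ⟨h1, h2⟩ | ⟨h1, h2⟩
      · rw [← hπu, ← hπv, h1, h2, coe_F, coe_F]; exact hπ₀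
      · rw [← hπu, ← hπv, h1, h2, coe_F, coe_F]; exact hπ₀.symm
    by_contra hcon
    push_neg at hcon
    set fp : MvPolynomial (Fin r) k := monomial u' 1 - monomial v' 1 with hfp
    have hffp : mon k u - mon k v = fp := by rw [hmu, hmv]
    set M : Set (MvPolynomial (Fin r) k) := B \ {fp, -fp} with hM
    have hMsub : Ideal.span M ≤ IA := by
      rw [hIA]; exact Ideal.span_mono Set.diff_subset
    have hMform : ∀ g ∈ M, ∃ p q : Fin r → ℕ, π p = π q ∧ g = mon k p - mon k q :=
      fun g hg => hg.1
    have hfib' : ∀ w : Fin r →₀ ℕ, π ⇑w = π u → w = u' ∨ w = v' := by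
      intro w hw
      by_contra hwc
      push_neg at hwc
      obtain ⟨hwu, hwv⟩ := hwc
      have hg₁B : (monomial u' (1:k) - monomial w 1) ∈ B := hBmem u' w (by rw [hπu, hw])
      have hg₂B : (monomial w (1:k) - monomial v' 1) ∈ B := hBmem w v' (by rw [hπv, hw, hπuv])
      have hwu' : ¬(u' = w) := fun h' => hwu h'.symm
      have hwv' : ¬(v' = w) := fun h' => hwv h'.symm
      have hg₁M : (monomial u' (1:k) - monomial w 1) ∈ M := by
        refine ⟨hg₁B, ?_⟩
        rintro (h | h) <;>
        · have hcoef := congrArg (coeff w) h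
          rw [hfp] at hcoef
          simp [coeff_sub, coeff_neg, coeff_monomial, hwu', hwv'] at hcoef
      have hg₂M : (monomial w (1:k) - monomial v' 1) ∈ M := by
        refine ⟨hg₂B, ?_⟩
        rintro (h | h) <;>
        · have hcoef := congrArg (coeff w) h
          rw [hfp] at hcoef
          simp [coeff_sub, coeff_neg, coeff_monomial, hwu', hwv'] at hcoef
      have hfsp : fp ∈ Ideal.span M := by
        have hsplit : fp = (monomial u' (1:k) - monomial w 1)
            + (monomial w (1:k) - monomial v' 1) := by
          rw [hfp, sub_add_sub_cancel]
        rw [hsplit]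
        exact Ideal.add_mem _ (Ideal.subset_span hg₁M) (Ideal.subset_span hg₂M)
      have hMspan : Ideal.span M = IA := by
        refine le_antisymm hMsub ?_
        rw [hIA]
        refine Ideal.span_le.mpr (fun g hgB => ?_)
        by_cases h1 : g = fp
        · rw [h1]; exact hfsp
        · by_cases h2 : g = -fp
          · rw [h2]
            exact (Ideal.span M).neg_mem hfsp
          · exact Ideal.subset_span ⟨hgB, by simp [h1, h2]⟩
      rcases hind.2.2 M ⟨hMform, hMspan⟩ with h | h
      · exact h.2 (by rw [hffp]; exact Set.mem_insert _ _)
      · refine h.2 ?_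
        right
        rw [hffp]
        exact rfl
    have hSspan : ∀ s ∈ S, s ∈ Ideal.span M := by
      intro s hsS
      have hsIA : s ∈ IA := by rw [← hS.2]; exact Ideal.subset_span hsS
      obtain ⟨b', hb'⟩ := hS.1 s hsS
      have hsum : ∑ d ∈ s.support, coeff d s = 0 := hsum0 s hsIA b' hb'
      refine homog_decomp s hsum _ (fun d hd e he => ?_)
      by_cases hde : d = e
      · rw [hde, sub_self]; exact Ideal.zero_mem _
      · have hdeB : monomial d (1:k) - monomial e 1 ∈ B :=
          hBmem d e (by rw [hb' d hd, hb' e he])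
        by_cases hh : (monomial d (1:k) - monomial e 1) ∈ ({fp, -fp} : Set _)
        · exfalso
          have hub' : π ⇑u' = b' := by
            rcases hh with hh | hh
            · rw [hfp] at hh
              rcases binomial_eq hde hne' hh with ⟨h1, h2⟩ | ⟨h1, h2⟩
              · rw [← h1]; exact hb' d hd
              · rw [← h2]; exact hb' e he
            · have hh' : monomial d (1:k) - monomial e 1
                  = monomial v' 1 - monomial u' 1 := by
                rw [Set.mem_singleton_iff] at hh
                rw [hh, hfp, neg_sub]
              rcases binomial_eq hde (Ne.symm hne') hh' with ⟨h1, h2⟩ | ⟨h1, h2⟩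
              · rw [← h2]; exact hb' e he
              · rw [← h1]; exact hb' d hd
          have hsupp : s.support ⊆ {u', v'} := by
            intro x hx
            have hx' : π ⇑x = π u := by rw [hb' x hx, ← hub', hπu]
            rcases hfib' x hx' with rfl | rfl
            · exact Finset.mem_insert_self _ _
            · exact Finset.mem_insert_of_mem (Finset.mem_singleton_self _)
          have hshape := shape s u' v' hne' hsupp hsum
          have hc0 : coeff u' s ≠ 0 := by
            intro h0
            rw [h0, zero_smul] at hshape
            rw [hshape] at hd
            simp at hd
          refine hcon (coeff u' s) hc0 ?_
          rw [hffp, ← hshape]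
          exact hsS
        · exact Ideal.subset_span ⟨hdeB, hh⟩
    have hMspan : Ideal.span M = IA := le_antisymm hMsub (by
      rw [← hS.2]; exact Ideal.span_le.mpr (fun s hs => hSspan s hs))
    rcases hind.2.2 M ⟨hMform, hMspan⟩ with h | h
    · exact h.2 (by rw [hffp]; exact Set.mem_insert _ _)
    · refine h.2 ?_
      right
      rw [hffp]
      exact rfl
  · intro hRHS
    have hBgen : IsHomogGenSet k π IA B := ⟨hBhom, hIA.symm⟩
    have hπuv : π u = π v := by
      obtain ⟨c, hc, hcB⟩ := hRHS B hBgen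
      obtain ⟨p, q, hpq, heq⟩ := hcB
      have heq' : c • (monomial u' (1:k) - monomial v' 1)
          = monomial (Finsupp.equivFunOnFinite.symm p) 1
            - monomial (Finsupp.equivFunOnFinite.symm q) 1 := by
        rw [← mon_eq p, ← mon_eq q, ← hmu, ← hmv]; exact heq
      rcases smul_binom_eq u' v' hne' c hc _ _ heq' with ⟨_, h1, h2⟩ | ⟨_, h1, h2⟩
      · rw [← hπu, ← hπv, h1, h2, coe_F, coe_F]; exact hpq
      · rw [← hπu, ← hπv, h1, h2, coe_F, coe_F]; exact hpq.symm
    refine ⟨⟨u, v, huv, hπuv, rfl⟩, hmem, ?_⟩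
    intro S hSbin
    have hShom : IsHomogGenSet k π IA S :=
      ⟨fun g hg => hBhom g (by
        obtain ⟨p, q, h1, h2⟩ := hSbin.1 g hg
        exact ⟨p, q, h1, h2⟩), hSbin.2⟩
    obtain ⟨c, hc, hcS⟩ := hRHS S hShom
    obtain ⟨p, q, hpq, heq⟩ := hSbin.1 _ hcS
    have heq' : c • (monomial u' (1:k) - monomial v' 1)
        = monomial (Finsupp.equivFunOnFinite.symm p) 1
          - monomial (Finsupp.equivFunOnFinite.symm q) 1 := by
      rw [← mon_eq p, ← mon_eq q, ← hmu, ← hmv]; exact heq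
    rcases smul_binom_eq u' v' hne' c hc _ _ heq' with ⟨hc1, _, _⟩ | ⟨hc1, _, _⟩
    · left
      rw [hc1, one_smul] at hcS
      exact hcS
    · right
      rw [hc1, neg_one_smul] at hcS
      exact hcS
end

section
/- For every a ∈ A, a is a minimal A-degree of I_A if and only if the graph G_a is not connected. -/
open MvPolynomial

set_option linter.unusedSectionVars false

section Aux

variable {k : Type*} [Field k] {r : ℕ} {A : Type*} [AddCancelCommMonoid A]

lemma mon_toFinsupp (d : Fin r →₀ ℕ) : mon k ⇑d = monomial d 1 := by
  rw [mon, monomial_eq, map_one, one_mul, Finsupp.prod_pow]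

lemma mon_eq_monomial (u : Fin r → ℕ) :
    mon k u = monomial (Finsupp.equivFunOnFinite.symm u) 1 := by
  rw [← mon_toFinsupp]; rfl

lemma mon_add (u v : Fin r → ℕ) : mon k (u + v) = mon k u * mon k v := by
  simp [mon, pow_add, Finset.prod_mul_distrib]

lemma mon_single_one (i : Fin r) :
    mon k ⇑(Finsupp.single i (1 : ℕ)) = X i := by
  rw [mon]
  rw [show (∏ j, (X j : MvPolynomial (Fin r) k) ^ (Finsupp.single i (1:ℕ)) j)
      = ∏ j, if i = j then X j else 1 from
    Finset.prod_congr rfl fun j _ => by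
      by_cases h : i = j <;> simp [Finsupp.single_apply, h]]
  simp

variable {a : Fin r → A} {π : (Fin r → ℕ) → A}

lemma pi_add (hπ : ∀ u, π u = ∑ i, u i • a i) (x y : Fin r → ℕ) :
    π (x + y) = π x + π y := by
  simp [hπ, add_smul, Finset.sum_add_distrib]

lemma pi_single (hπ : ∀ u, π u = ∑ i, u i • a i) (i : Fin r) :
    π ⇑(Finsupp.single i (1 : ℕ)) = a i := by
  rw [hπ]
  rw [show (∑ j, (Finsupp.single i (1:ℕ)) j • a j) = ∑ j, if i = j then a j else 0 from
    Finset.sum_congr rfl fun j _ => by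
      by_cases h : i = j <;> simp [Finsupp.single_apply, h]]
  simp

/-- differences of monomials of reachable vertices lie in `𝔪 * IA`. -/
lemma reach_mem
    (hπ : ∀ u, π u = ∑ i, u i • a i)
    (IA : Ideal (MvPolynomial (Fin r) k))
    (hIA : IA = Ideal.span {f | ∃ u v : Fin r → ℕ, π u = π v ∧ f = mon k u - mon k v})
    {b : A} (G : SimpleGraph {w : Fin r → ℕ // π w = b})
    (hG : ∀ u v, G.Adj u v ↔ u ≠ v ∧ (fun i => min (u.1 i) (v.1 i)) ≠ 0)
    (p q : {w : Fin r → ℕ // π w = b}) (h : G.Reachable p q) :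
    mon k p.1 - mon k q.1 ∈
      Ideal.span (Set.range (X : Fin r → MvPolynomial (Fin r) k)) * IA := by
  obtain ⟨wk⟩ := h
  induction wk with
  | nil => simp
  | @cons p m q hadj wk ih =>
    have hstep : mon k p.1 - mon k m.1 ∈
        Ideal.span (Set.range (X : Fin r → MvPolynomial (Fin r) k)) * IA := by
      rw [hG] at hadj
      obtain ⟨hne, hmin⟩ := hadj
      obtain ⟨i, hi⟩ := Function.ne_iff.mp hmin
      have hpi : p.1 i ≠ 0 ∧ m.1 i ≠ 0 := by
        constructor <;> (intro h0; apply hi; simp [h0])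
      set e : Fin r → ℕ := ⇑(Finsupp.single i (1 : ℕ)) with he
      set p' : Fin r → ℕ := fun j => p.1 j - e j with hp'
      set m' : Fin r → ℕ := fun j => m.1 j - e j with hm'
      have hp : p.1 = p' + e := funext fun j => by
        by_cases h : j = i
        · subst h
          have : e j = 1 := by simp [he, Finsupp.single_apply]
          simp only [Pi.add_apply, hp', this]
          omega
        · have : e j = 0 := by simp [he, Finsupp.single_apply, Ne.symm h]
          simp [hp', this]
      have hm : m.1 = m' + e := funext fun j => by
        by_cases h : j = i
        · subst h
          have : e j = 1 := by simp [he, Finsupp.single_apply]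
          simp only [Pi.add_apply, hm', this]
          omega
        · have : e j = 0 := by simp [he, Finsupp.single_apply, Ne.symm h]
          simp [hm', this]
      have hpim : π p' = π m' := by
        have h1 : π p' + a i = π m' + a i := by
          rw [← pi_single hπ i, ← pi_add hπ, ← pi_add hπ, ← hp, ← hm, p.2, m.2]
        exact add_right_cancel h1
      have hfac : mon k p.1 - mon k m.1 = X i * (mon k p' - mon k m') := by
        rw [hp, hm, mon_add, mon_add, he, mon_single_one]
        ring
      rw [hfac]
      refine Ideal.mul_mem_mul (Ideal.subset_span ⟨i, rfl⟩) ?_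
      rw [hIA]
      exact Ideal.subset_span ⟨p', m', hpim, rfl⟩
    have h2 := Ideal.add_mem _ hstep ih
    simpa using h2
end Aux

section Aux2

variable {k : Type*} [Field k] {r : ℕ} {A : Type*} [AddCancelCommMonoid A]
variable {a : Fin r → A} {π : (Fin r → ℕ) → A}

lemma prod_single_one {ι : Type*} (s : Finset ι) (c : ι → A) :
    (∏ i ∈ s, (AddMonoidAlgebra.single (c i) (1 : k) : AddMonoidAlgebra k A))
      = AddMonoidAlgebra.single (∑ i ∈ s, c i) 1 := by
  classical
  induction s using Finset.induction_on with
  | empty => simp [AddMonoidAlgebra.one_def]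
  | insert _ _ hnotmem ih =>
    rw [Finset.prod_insert hnotmem, Finset.sum_insert hnotmem, ih,
      AddMonoidAlgebra.single_mul_single, one_mul]

lemma homog_coeff_sum
    (hπ : ∀ u, π u = ∑ i, u i • a i)
    (IA : Ideal (MvPolynomial (Fin r) k))
    (hIA : IA = Ideal.span {f | ∃ u v : Fin r → ℕ, π u = π v ∧ f = mon k u - mon k v})
    (b : A) (f : MvPolynomial (Fin r) k) (hf : f ∈ IA)
    (hhom : ∀ d ∈ f.support, π ⇑d = b) :
    ∑ d ∈ f.support, coeff d f = 0 := by
  classical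
  set T : MvPolynomial (Fin r) k →ₐ[k] AddMonoidAlgebra k A :=
    aeval fun i => AddMonoidAlgebra.single (a i) 1 with hT
  have hTmon : ∀ u : Fin r → ℕ, T (mon k u) = AddMonoidAlgebra.single (π u) 1 := by
    intro u
    rw [mon, map_prod, hπ]
    simp only [map_pow, hT, aeval_X, AddMonoidAlgebra.single_pow, one_pow]
    exact prod_single_one _ _
  have hker : T f = 0 := by
    have hle : IA ≤ RingHom.ker (T : MvPolynomial (Fin r) k →+* AddMonoidAlgebra k A) := by
      rw [hIA, Ideal.span_le]
      rintro g ⟨u, v, huv, rfl⟩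
      simp [RingHom.mem_ker, hTmon, huv]
    exact hle hf
  have hTf : T f = AddMonoidAlgebra.single b (∑ d ∈ f.support, coeff d f) := by
    conv_lhs => rw [← support_sum_monomial_coeff f]
    rw [map_sum]
    have : ∀ d ∈ f.support,
        T (monomial d (coeff d f)) = AddMonoidAlgebra.single b (coeff d f) := by
      intro d hd
      have h1 : (monomial d (coeff d f) : MvPolynomial (Fin r) k)
          = coeff d f • monomial d 1 := by rw [smul_monomial, smul_eq_mul, mul_one]
      rw [h1, map_smul, ← mon_toFinsupp, hTmon, hhom d hd]
      ext x
      simp [Finsupp.smul_single]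
    rw [Finset.sum_congr rfl this]
    exact (map_sum (AddMonoidAlgebra.singleAddHom b) _ _).symm
  rw [hTf] at hker
  exact AddMonoidAlgebra.single_eq_zero.mp hker

noncomputable def LL (k : Type*) [Field k] {r : ℕ} (w : (Fin r →₀ ℕ) → k) :
    MvPolynomial (Fin r) k →ₗ[k] k :=
  (Finsupp.linearCombination k w).comp (AddMonoidAlgebra.coeffLinearEquiv k).toLinearMap

lemma LL_monomial (w : (Fin r →₀ ℕ) → k) (d : Fin r →₀ ℕ) (e : k) :
    LL k w (monomial d e) = e * w d := by
  rw [LL, LinearMap.comp_apply, LinearEquiv.coe_coe, ← single_eq_monomial]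
  exact (Finsupp.linearCombination_single k e d).trans (by rw [smul_eq_mul])

end Aux2

section Aux3

variable {k : Type*} [Field k] {r : ℕ} {A : Type*} [AddCancelCommMonoid A]
variable {a : Fin r → A} {π : (Fin r → ℕ) → A}

lemma LL_vanish
    (IA : Ideal (MvPolynomial (Fin r) k))
    (hIA : IA = Ideal.span {f | ∃ u v : Fin r → ℕ, π u = π v ∧ f = mon k u - mon k v})
    (w : (Fin r →₀ ℕ) → k)
    (hw : ∀ (D U V : Fin r →₀ ℕ) (i : Fin r), D i ≠ 0 → π ⇑U = π ⇑V →
      w (D + U) = w (D + V))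
    (g : MvPolynomial (Fin r) k)
    (hg : g ∈ Ideal.span (Set.range (X : Fin r → MvPolynomial (Fin r) k)) * IA) :
    LL k w g = 0 := by
  rw [hIA, Ideal.span_mul_span] at hg
  have key : ∀ x ∈ Ideal.span (open Pointwise in Set.range (X : Fin r → MvPolynomial (Fin r) k) *
      {f | ∃ u v : Fin r → ℕ, π u = π v ∧ f = mon k u - mon k v}),
      ∀ c : MvPolynomial (Fin r) k, LL k w (c * x) = 0 := by
    intro x hx
    induction hx using Submodule.span_induction with
    | mem x hx =>
      obtain ⟨s, ⟨i, rfl⟩, t, ⟨u, v, huv, rfl⟩, hx3⟩ := hx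
      subst hx3
      beta_reduce
      intro c
      induction c using MvPolynomial.induction_on' with
      | monomial d e =>
        have hXi : (X i : MvPolynomial (Fin r) k) = monomial (Finsupp.single i 1) 1 := rfl
        rw [mon_eq_monomial, mon_eq_monomial, hXi, mul_sub, mul_sub, ← mul_assoc,
          ← mul_assoc]
        simp only [monomial_mul, mul_one]
        rw [map_sub, LL_monomial, LL_monomial]
        rw [hw (d + Finsupp.single i 1) _ _ i (by simp)
          (show π ⇑(Finsupp.equivFunOnFinite.symm u) = π ⇑(Finsupp.equivFunOnFinite.symm v) from huv)]
        ring
      | add p q ihp ihq => rw [add_mul, map_add, ihp, ihq, add_zero]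
    | zero => intro c; simp
    | add x y hx hy ihx ihy => intro c; rw [mul_add, map_add, ihx, ihy, add_zero]
    | smul c' x hx ih => intro c; rw [smul_eq_mul, ← mul_assoc]; exact ih _
  have h1 := key g hg 1
  rwa [one_mul] at h1

end Aux3

section Aux4

variable {k : Type*} [Field k] {r : ℕ} {A : Type*} [AddCancelCommMonoid A]
variable {a : Fin r → A}

open scoped Classical in
noncomputable def wfun (k : Type*) [Field k] {r : ℕ} {A : Type*} [AddCancelCommMonoid A]
    (π : (Fin r → ℕ) → A) (b : A) (G : SimpleGraph {w : Fin r → ℕ // π w = b})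
    (p : {w : Fin r → ℕ // π w = b}) : (Fin r →₀ ℕ) → k :=
  fun d => if h : π ⇑d = b then (if G.Reachable p ⟨⇑d, h⟩ then 1 else 0) else 0

open scoped Classical in
lemma wfun_pos {π : (Fin r → ℕ) → A} {b : A} {G : SimpleGraph {w : Fin r → ℕ // π w = b}}
    (p : {w : Fin r → ℕ // π w = b}) (d : Fin r →₀ ℕ) (h : π ⇑d = b) :
    wfun k π b G p d = if G.Reachable p ⟨⇑d, h⟩ then 1 else 0 := by
  rw [wfun, dif_pos h]

lemma wfun_neg {π : (Fin r → ℕ) → A} {b : A} {G : SimpleGraph {w : Fin r → ℕ // π w = b}}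
    (p : {w : Fin r → ℕ // π w = b}) (d : Fin r →₀ ℕ) (h : ¬ π ⇑d = b) :
    wfun k π b G p d = 0 := by
  rw [wfun, dif_neg h]

end Aux4


/-- `b ∈ A` is a minimal `A`-degree of `I_A` (the `A`-degree-`b` component of `I_A` is
not contained in that of `𝔪·I_A`) if and only if the graph `G_b`, on the fiber
`π⁻¹(b)` with `u ∼ v` iff `u ≠ v` and `min(u,v) ≠ 0`, is not connected. -/
theorem statement_3 {k : Type*} [Field k] {r : ℕ} (hr : 1 ≤ r)
    {A : Type*} [AddCancelCommMonoid A]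
    (hred : ∀ x y : A, x + y = 0 → x = 0 ∧ y = 0)
    (a : Fin r → A) (ha : ∀ i, a i ≠ 0)
    (π : (Fin r → ℕ) → A) (hπ : ∀ u, π u = ∑ i, u i • a i)
    (hgen : ∀ x : A, ∃ u, π u = x)
    (hfib : ∀ x : A, {u : Fin r → ℕ | π u = x}.Finite)
    (IA : Ideal (MvPolynomial (Fin r) k))
    (hIA : IA = Ideal.span {f | ∃ u v : Fin r → ℕ, π u = π v ∧ f = mon k u - mon k v})
    (b : A)
    (G : SimpleGraph {w : Fin r → ℕ // π w = b})
    (hG : ∀ u v, G.Adj u v ↔ u ≠ v ∧ (fun i => min (u.1 i) (v.1 i)) ≠ 0) :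
    (∃ f ∈ IA, (∀ d ∈ f.support, π ⇑d = b) ∧
        f ∉ Ideal.span (Set.range (X : Fin r → MvPolynomial (Fin r) k)) * IA) ↔
      ¬ G.Connected := by
  classical
  constructor
  · rintro ⟨f, hfIA, hhom, hfnot⟩ hcon
    apply hfnot
    by_cases hsupp : f.support = ∅
    · have hf0 : f = 0 := by
        rwa [← MvPolynomial.support_eq_empty]
      rw [hf0]; exact zero_mem _
    · obtain ⟨d0, hd0⟩ := Finset.nonempty_of_ne_empty hsupp
      have hsum := homog_coeff_sum hπ IA hIA b f hfIA hhom
      have h1 : ∀ d : Fin r →₀ ℕ, (coeff d f) • (mon k ⇑d - mon k ⇑d0)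
          = monomial d (coeff d f) - coeff d f • mon k ⇑d0 := by
        intro d
        rw [smul_sub, mon_toFinsupp, smul_monomial, smul_eq_mul, mul_one]
      have hfrw : f = ∑ d ∈ f.support, coeff d f • (mon k ⇑d - mon k ⇑d0) := by
        calc f = (∑ d ∈ f.support, monomial d (coeff d f))
              - (∑ d ∈ f.support, coeff d f) • mon k ⇑d0 := by
              rw [support_sum_monomial_coeff, hsum, zero_smul, sub_zero]
          _ = ∑ d ∈ f.support, (monomial d (coeff d f) - coeff d f • mon k ⇑d0) := by
              rw [Finset.sum_sub_distrib, Finset.sum_smul]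
          _ = ∑ d ∈ f.support, coeff d f • (mon k ⇑d - mon k ⇑d0) :=
              Finset.sum_congr rfl fun d _ => (h1 d).symm
      rw [hfrw]
      refine Submodule.sum_mem _ fun d hd => ?_
      rw [smul_eq_C_mul]
      exact Ideal.mul_mem_left _ _
        (reach_mem hπ IA hIA G hG ⟨⇑d, hhom d hd⟩ ⟨⇑d0, hhom d0 hd0⟩
          (hcon.preconnected _ _))
  · intro hnc
    have hne : Nonempty {w : Fin r → ℕ // π w = b} :=
      ⟨⟨(hgen b).choose, (hgen b).choose_spec⟩⟩
    have hpre : ¬ G.Preconnected := fun h => hnc ((SimpleGraph.connected_iff G).mpr ⟨h, hne⟩)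
    rw [SimpleGraph.Preconnected] at hpre
    push_neg at hpre
    obtain ⟨p, q, hpq⟩ := hpre
    refine ⟨mon k p.1 - mon k q.1, ?_, ?_, ?_⟩
    · rw [hIA]; exact Ideal.subset_span ⟨p.1, q.1, p.2.trans q.2.symm, rfl⟩
    · intro d hd
      rw [mon_eq_monomial, mon_eq_monomial] at hd
      have hmem := MvPolynomial.support_sub (Fin r) _ _ hd
      rw [Finset.mem_union] at hmem
      rcases hmem with h | h <;>
        · rw [support_monomial, if_neg (one_ne_zero : (1:k) ≠ 0),
            Finset.mem_singleton] at h
          subst h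
          first | exact p.2 | exact q.2
    · -- f ∉ 𝔪 * IA via the linear functional LL (wfun ...)
      intro hmem
      set w : (Fin r →₀ ℕ) → k := wfun k π b G p with hwdef
      have hw : ∀ (D U V : Fin r →₀ ℕ) (i : Fin r), D i ≠ 0 → π ⇑U = π ⇑V →
          w (D + U) = w (D + V) := by
        intro D U V i hDi hUV
        have hcoe : ∀ E : Fin r →₀ ℕ, ⇑(D + E) = ⇑D + ⇑E := fun E => Finsupp.coe_add D E
        have hππ : π ⇑(D + U) = π ⇑(D + V) := by
          rw [hcoe, hcoe, pi_add hπ, pi_add hπ, hUV]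
        by_cases hb1 : π ⇑(D + U) = b
        · have hb2 : π ⇑(D + V) = b := by rw [← hππ]; exact hb1
          have hreach : G.Reachable ⟨⇑(D+U), hb1⟩ ⟨⇑(D+V), hb2⟩ := by
            by_cases heq : (⟨⇑(D+U), hb1⟩ : {w : Fin r → ℕ // π w = b}) = ⟨⇑(D+V), hb2⟩
            · rw [heq]
            · refine SimpleGraph.Adj.reachable ?_
              rw [hG]
              refine ⟨heq, fun h0 => ?_⟩
              have h2 := congrFun h0 i
              simp only [Pi.zero_apply, Finsupp.coe_add, Pi.add_apply] at h2
              omega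
          rw [hwdef, wfun_pos p _ hb1, wfun_pos p _ hb2]
          exact if_congr ⟨fun h => h.trans hreach, fun h => h.trans hreach.symm⟩ rfl rfl
        · have hb2 : ¬ π ⇑(D + V) = b := fun h => hb1 (hππ.trans h)
          rw [hwdef, wfun_neg p _ hb1, wfun_neg p _ hb2]
      have h0 := LL_vanish IA hIA w hw _ hmem
      have hval : LL k w (mon k p.1 - mon k q.1) = 1 := by
        rw [mon_eq_monomial, mon_eq_monomial, map_sub, LL_monomial, LL_monomial]
        have hbp : π ⇑(Finsupp.equivFunOnFinite.symm p.1) = b := p.2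
        have hbq : π ⇑(Finsupp.equivFunOnFinite.symm q.1) = b := q.2
        have e1 : w (Finsupp.equivFunOnFinite.symm p.1) = 1 := by
          rw [hwdef, wfun_pos p _ hbp]
          rw [if_pos]
          rw [show (⟨⇑(Finsupp.equivFunOnFinite.symm p.1), hbp⟩ :
            {w : Fin r → ℕ // π w = b}) = p from Subtype.ext rfl]
        have e2 : w (Finsupp.equivFunOnFinite.symm q.1) = 0 := by
          rw [hwdef, wfun_pos p _ hbq]
          rw [if_neg]
          rw [show (⟨⇑(Finsupp.equivFunOnFinite.symm q.1), hbq⟩ :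
            {w : Fin r → ℕ // π w = b}) = q from Subtype.ext rfl]
          exact hpq
        rw [e1, e2]
        ring
      rw [h0] at hval
      exact one_ne_zero hval.symm
end

section
/- For every a ∈ A, there exists an indispensable monomial of I_A of A-degree a (i.e. a is a quasi-indispensable A-degree of I_A) if and only if the fiber π^{-1}(a) has cardinality at least 2 and the graph G_a has an isolated vertex, i.e. there exists u ∈ π^{-1}(a) such that min(u,w) = 0 for every w ∈ π^{-1}(a) with w ≠ u. -/
open MvPolynomial

namespace S6
variable {k : Type*} [Field k] {r : ℕ}

noncomputable def μ {r : ℕ} (u : Fin r → ℕ) : Fin r →₀ ℕ := Finsupp.equivFunOnFinite.symm u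

@[simp] lemma μ_apply (u : Fin r → ℕ) (i : Fin r) : μ u i = u i := rfl

lemma μ_injective : Function.Injective (μ (r := r)) := Finsupp.equivFunOnFinite.symm.injective

lemma μ_add (u v : Fin r → ℕ) : μ (u + v) = μ u + μ v := by
  ext i; simp

lemma mon_eq_monomial (u : Fin r → ℕ) : mon k u = monomial (μ u) (1 : k) := by
  rw [mon, ← prod_X_pow_eq_monomial]
  exact (Finset.prod_subset (Finset.subset_univ _) (fun x _ hx => by
    rw [show u x = 0 from Finsupp.notMem_support_iff.mp hx, pow_zero])).symm

lemma mon_mul (u v : Fin r → ℕ) : mon k u * mon k v = mon k (u + v) := by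
  simp [mon_eq_monomial, μ_add, monomial_mul]

lemma coeff_mon (x u : Fin r → ℕ) :
    coeff (μ x) (mon k u) = if u = x then 1 else 0 := by
  rw [mon_eq_monomial, coeff_monomial]
  simp [μ_injective.eq_iff]

lemma binom_cases {u v p q : Fin r → ℕ} (hpq : p ≠ q)
    (h : mon k u - mon k v = mon k p - mon k q) :
    (u = p ∧ v = q) ∨ (u = q ∧ v = p) := by
  have huv : u ≠ v := by
    rintro rfl
    rw [sub_self] at h
    have := congrArg (MvPolynomial.coeff (μ p)) h.symm
    simp only [coeff_sub, coeff_mon, coeff_zero, if_pos rfl, if_neg (Ne.symm hpq)] at this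
    simp at this
  have hu := congrArg (MvPolynomial.coeff (μ u)) h
  have hv := congrArg (MvPolynomial.coeff (μ v)) h
  simp only [coeff_sub, coeff_mon, if_pos rfl, if_neg (Ne.symm huv)] at hu
  simp only [coeff_sub, coeff_mon, if_pos rfl, if_neg huv] at hv
  -- hu : 1 - 0 = (if p = u then 1 else 0) - (if q = u then 1 else 0)
  -- hv : 0 - 1 = (if p = v then 1 else 0) - (if q = v then 1 else 0)
  by_cases hpu : p = u
  · have hqu : q ≠ u := fun h' => hpq (hpu.trans h'.symm)
    have hpv : p ≠ v := fun h' => huv (hpu.symm.trans h')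
    rw [if_neg hpv] at hv
    by_cases hqv : q = v
    · exact Or.inl ⟨hpu.symm, hqv.symm⟩
    · rw [if_neg hqv] at hv; simp at hv
  · rw [if_neg hpu] at hu
    by_cases hqu : q = u
    · have hqv : q ≠ v := fun h' => huv (hqu.symm.trans h')
      rw [if_neg hqv] at hv
      by_cases hpv : p = v
      · exact Or.inr ⟨hqu.symm, hpv.symm⟩
      · rw [if_neg hpv] at hv; simp at hv
    · rw [if_neg hqu] at hu; simp at hu

lemma mon_sub_ne_zero {p q : Fin r → ℕ} (hpq : p ≠ q) : mon k p - mon k q ≠ 0 := by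
  intro h
  have := congrArg (MvPolynomial.coeff (μ p)) h
  simp only [coeff_sub, coeff_mon, coeff_zero, if_pos rfl, if_neg (Ne.symm hpq)] at this
  simp at this

section Pi
variable {A : Type*} [AddCancelCommMonoid A]

lemma sum_eq_zero (hred : ∀ x y : A, x + y = 0 → x = 0 ∧ y = 0)
    {ι : Type*} (s : Finset ι) (f : ι → A) (h : ∑ i ∈ s, f i = 0) : ∀ i ∈ s, f i = 0 := by
  induction s using Finset.cons_induction with
  | empty => simp
  | cons j s hj ih =>
    rw [Finset.sum_cons] at h
    obtain ⟨h1, h2⟩ := hred _ _ h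
    intro i hi
    rcases Finset.mem_cons.mp hi with rfl | hi
    · exact h1
    · exact ih h2 i hi

lemma pi_add {a : Fin r → A} {π : (Fin r → ℕ) → A} (hπ : ∀ u, π u = ∑ i, u i • a i)
    (u v : Fin r → ℕ) : π (u + v) = π u + π v := by
  simp [hπ, add_smul, Finset.sum_add_distrib]

lemma pi_zero (hred : ∀ x y : A, x + y = 0 → x = 0 ∧ y = 0)
    {a : Fin r → A} (ha : ∀ i, a i ≠ 0) {π : (Fin r → ℕ) → A}
    (hπ : ∀ u, π u = ∑ i, u i • a i) {m : Fin r → ℕ} (h : π m = 0) : m = 0 := by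
  rw [hπ] at h
  funext i
  have h1 := sum_eq_zero hred _ _ h i (Finset.mem_univ i)
  by_contra hmi
  obtain ⟨n, hn⟩ := Nat.exists_eq_succ_of_ne_zero hmi
  rw [hn, succ_nsmul] at h1
  exact ha i (hred _ _ h1).2

end Pi
end S6

/-- There is an indispensable monomial of `I_A` of `A`-degree `b` (i.e. `b` is a
quasi-indispensable `A`-degree) if and only if the fiber `π⁻¹(b)` has at least two
elements and the graph `G_b` has an isolated vertex. -/
theorem statement_6 {k : Type*} [Field k] {r : ℕ} (hr : 1 ≤ r)
    {A : Type*} [AddCancelCommMonoid A]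
    (hred : ∀ x y : A, x + y = 0 → x = 0 ∧ y = 0)
    (a : Fin r → A) (ha : ∀ i, a i ≠ 0)
    (π : (Fin r → ℕ) → A) (hπ : ∀ u, π u = ∑ i, u i • a i)
    (hgen : ∀ x : A, ∃ u, π u = x)
    (hfib : ∀ x : A, {u : Fin r → ℕ | π u = x}.Finite)
    (IA : Ideal (MvPolynomial (Fin r) k))
    (hIA : IA = Ideal.span {f | ∃ u v : Fin r → ℕ, π u = π v ∧ f = mon k u - mon k v})
    (b : A) :
    (∃ u : Fin r → ℕ, π u = b ∧ IsIndispMonomial k π IA u) ↔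
      2 ≤ {w : Fin r → ℕ | π w = b}.ncard ∧
        ∃ u : Fin r → ℕ, π u = b ∧
          ∀ w : Fin r → ℕ, π w = b → w ≠ u → ∀ i, min (u i) (w i) = 0 := by
  classical
  constructor
  · rintro ⟨u, hub, hind⟩
    have hS1 : IsBinomGenSet k π IA
        {f | ∃ p q : Fin r → ℕ, π p = π q ∧ p ≠ q ∧ f = mon k p - mon k q} := by
      refine ⟨?_, ?_⟩
      · rintro f ⟨p, q, h1, -, rfl⟩; exact ⟨p, q, h1, rfl⟩
      · rw [hIA]
        refine le_antisymm (Ideal.span_mono ?_) (Ideal.span_le.mpr ?_)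
        · rintro f ⟨p, q, h1, -, rfl⟩; exact ⟨p, q, h1, rfl⟩
        · rintro f ⟨p, q, h1, rfl⟩
          by_cases hpq : p = q
          · rw [hpq, sub_self]; simp
          · exact Ideal.subset_span ⟨p, q, h1, hpq, rfl⟩
    obtain ⟨f, hfS, v, hfv⟩ := hind _ hS1
    obtain ⟨p, q, hπpq, hpq, rfl⟩ := hfS
    have hup : u = p ∨ u = q := by
      rcases hfv with h | h
      · rcases S6.binom_cases hpq h.symm with ⟨h1, -⟩ | ⟨h1, -⟩
        · exact Or.inl h1
        · exact Or.inr h1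
      · rcases S6.binom_cases hpq h.symm with ⟨-, h1⟩ | ⟨-, h1⟩
        · exact Or.inr h1
        · exact Or.inl h1
    have hpb : π p = b := by
      rcases hup with h | h
      · exact h ▸ hub
      · exact hπpq.trans (h ▸ hub)
    have hqb : π q = b := hπpq.symm.trans hpb
    refine ⟨(Set.one_lt_ncard_iff (hfib b)).mpr ⟨p, q, hpb, hqb, hpq⟩, u, hub, ?_⟩
    by_contra hcon
    push_neg at hcon
    obtain ⟨w, hwb, hwu, i0, hi0⟩ := hcon
    set m : Fin r → ℕ := fun i => min (u i) (w i) with hmdef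
    set u' : Fin r → ℕ := fun i => u i - m i with hu'def
    set w' : Fin r → ℕ := fun i => w i - m i with hw'def
    have hmu : ∀ i, m i ≤ u i := fun i => min_le_left _ _
    have hmw : ∀ i, m i ≤ w i := fun i => min_le_right _ _
    have hmi0 : m i0 ≠ 0 := hi0
    have hum : u' + m = u := funext fun i => Nat.sub_add_cancel (hmu i)
    have hwm : w' + m = w := funext fun i => Nat.sub_add_cancel (hmw i)
    have hπuw' : π u' = π w' := by
      have h2 : π u' + π m = π w' + π m := by
        rw [← S6.pi_add hπ, ← S6.pi_add hπ, hum, hwm, hub, hwb]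
      exact add_right_cancel h2
    have hu'u : u' ≠ u := by
      intro h
      have hum' := hum
      rw [h] at hum'
      have := congrFun hum' i0
      simp only [Pi.add_apply] at this
      omega
    have hπmne : π m ≠ 0 := fun h0 => hmi0 (congrFun (S6.pi_zero hred ha hπ h0) i0)
    have hw'u : w' ≠ u := by
      intro h
      apply hπmne
      have h1 : π w' + π m = b := by rw [← S6.pi_add hπ, hwm, hwb]
      rw [h, hub] at h1
      have h2 : b + π m = b + 0 := by rw [add_zero]; exact h1
      exact add_left_cancel h2
    have hu'w' : u' ≠ w' := by
      intro h
      apply hwu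
      rw [← hwm, ← h, hum]
    set S2 : Set (MvPolynomial (Fin r) k) :=
      {f | ∃ p' q' : Fin r → ℕ, π p' = π q' ∧ p' ≠ q' ∧ p' ≠ u ∧ q' ≠ u ∧
          f = mon k p' - mon k q'} ∪ {mon k u' - mon k w'} with hS2def
    have hS2 : IsBinomGenSet k π IA S2 := by
      constructor
      · rintro f (⟨p', q', h1, -, -, -, rfl⟩ | rfl)
        · exact ⟨p', q', h1, rfl⟩
        · exact ⟨u', w', hπuw', rfl⟩
      · rw [hIA]
        apply le_antisymm
        · refine Ideal.span_le.mpr ?_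
          rintro f (⟨p', q', h1, -, -, -, rfl⟩ | rfl)
          · exact Ideal.subset_span ⟨p', q', h1, rfl⟩
          · exact Ideal.subset_span ⟨u', w', hπuw', rfl⟩
        · refine Ideal.span_le.mpr ?_
          have hg0 : mon k u' - mon k w' ∈ Ideal.span S2 :=
            Ideal.subset_span (Or.inr rfl)
          have huw : mon k u - mon k w ∈ Ideal.span S2 := by
            have hmul : mon k m * (mon k u' - mon k w') = mon k u - mon k w := by
              rw [mul_sub, S6.mon_mul, S6.mon_mul,
                show m + u' = u from (add_comm u' m) ▸ hum,
                show m + w' = w from (add_comm w' m) ▸ hwm]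
            exact hmul ▸ Ideal.mul_mem_left _ _ hg0
          have key : ∀ q', π q' = b → q' ≠ u → mon k u - mon k q' ∈ Ideal.span S2 := by
            intro q' hq'b hq'u
            by_cases hq'w : q' = w
            · rw [hq'w]; exact huw
            · have h2 : mon k w - mon k q' ∈ Ideal.span S2 :=
                Ideal.subset_span (Or.inl ⟨w, q', hwb.trans hq'b.symm,
                  fun h => hq'w h.symm, hwu, hq'u, rfl⟩)
              have h3 : mon k u - mon k q' =
                  (mon k u - mon k w) + (mon k w - mon k q') := by ring
              rw [h3]; exact Ideal.add_mem _ huw h2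
          rintro f ⟨p', q', h1, rfl⟩
          by_cases hpq' : p' = q'
          · rw [hpq', sub_self]; simp
          · by_cases hpu' : p' = u
            · rw [hpu'] at h1 ⊢
              exact key q' (h1.symm.trans hub) (fun h => hpq' (hpu'.trans h.symm))
            · by_cases hqu' : q' = u
              · rw [hqu'] at h1 ⊢
                have h3 : mon k p' - mon k u = -(mon k u - mon k p') := by ring
                rw [h3]
                exact neg_mem (key p' (h1.trans hub) hpu')
              · exact Ideal.subset_span (Or.inl ⟨p', q', h1, hpq', hpu', hqu', rfl⟩)
    obtain ⟨f, hfS, v, hfv⟩ := hind _ hS2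
    rcases hfS with ⟨p', q', -, hpq', hpu', hqu', rfl⟩ | rfl
    · rcases hfv with h | h
      · rcases S6.binom_cases hpq' h.symm with ⟨h1, -⟩ | ⟨h1, -⟩
        exacts [hpu' h1.symm, hqu' h1.symm]
      · rcases S6.binom_cases hpq' h.symm with ⟨-, h1⟩ | ⟨-, h1⟩
        exacts [hqu' h1.symm, hpu' h1.symm]
    · rcases hfv with h | h
      · rcases S6.binom_cases hu'w' h.symm with ⟨h1, -⟩ | ⟨h1, -⟩
        exacts [hu'u h1.symm, hw'u h1.symm]
      · rcases S6.binom_cases hu'w' h.symm with ⟨-, h1⟩ | ⟨-, h1⟩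
        exacts [hw'u h1.symm, hu'u h1.symm]
  · rintro ⟨hcard, u, hub, hiso⟩
    obtain ⟨w, hwb, hwu⟩ := Set.exists_ne_of_one_lt_ncard hcard u
    refine ⟨u, hub, ?_⟩
    intro S hS
    by_contra hcon
    push_neg at hcon
    have key : ∀ g ∈ S, ∀ h : MvPolynomial (Fin r) k,
        coeff (S6.μ u) (h * g) = 0 := by
      intro g hgS h
      obtain ⟨p, q, hπpq, rfl⟩ := hS.1 g hgS
      by_cases hpq : p = q
      · rw [hpq, sub_self, mul_zero, coeff_zero]
      · have hpu : p ≠ u := fun h' => (hcon _ hgS q).1 (by rw [h'])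
        have hqu : q ≠ u := fun h' => (hcon _ hgS p).2 (by rw [h'])
        have aux : ∀ p' q' : Fin r → ℕ, π p' = π q' → p' ≠ q' → p' ≠ u →
            ¬ S6.μ p' ≤ S6.μ u := by
          intro p' q' h1 h2 h3 hle
          have hle' : ∀ i, p' i ≤ u i := fun i => hle i
          have hmp : (fun i => u i - p' i) + p' = u :=
            funext fun i => Nat.sub_add_cancel (hle' i)
          by_cases hm0 : (fun i => u i - p' i) = (0 : Fin r → ℕ)
          · apply h3
            rw [hm0, zero_add] at hmp
            exact hmp
          · have hwb' : π ((fun i => u i - p' i) + q') = b := by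
              rw [S6.pi_add hπ, ← h1, ← S6.pi_add hπ, hmp, hub]
            have hwu' : (fun i => u i - p' i) + q' ≠ u := by
              intro h4
              apply h2
              funext i
              have e1 := congrFun (h4.trans hmp.symm) i
              simp only [Pi.add_apply] at e1
              omega
            obtain ⟨i, hi⟩ : ∃ i, (u i - p' i) ≠ 0 := by
              by_contra hc
              push_neg at hc
              exact hm0 (funext fun i => hc i)
            have h5 := hiso _ hwb' hwu' i
            simp only [Pi.add_apply] at h5
            have h6 := hle' i
            omega
        rw [S6.mon_eq_monomial, S6.mon_eq_monomial, mul_sub, coeff_sub,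
          coeff_mul_monomial', coeff_mul_monomial',
          if_neg (aux p q hπpq hpq hpu),
          if_neg (aux q p hπpq.symm (Ne.symm hpq) hqu), sub_zero]
    have hmem : ∀ f ∈ Ideal.span S, ∀ h, coeff (S6.μ u) (h * f) = 0 := by
      intro f hf
      refine Submodule.span_induction ?_ ?_ ?_ ?_ hf
      · exact fun g hg => key g hg
      · intro h
        rw [mul_zero, coeff_zero]
      · intro f g _ _ hf hg h
        rw [mul_add, coeff_add, hf h, hg h, add_zero]
      · intro c f _ hf h
        rw [smul_eq_mul, ← mul_assoc]
        exact hf (h * c)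
    have hf0 : mon k u - mon k w ∈ IA := by
      rw [hIA]
      exact Ideal.subset_span ⟨u, w, hub.trans hwb.symm, rfl⟩
    have h0 := hmem _ (by rw [hS.2]; exact hf0) 1
    rw [one_mul, coeff_sub, S6.coeff_mon, S6.coeff_mon, if_pos rfl, if_neg hwu] at h0
    simp at h0
end

section
/- The toric ideal I_A of the binary marginal independence model equals the ideal of k[X_1, …, X_16] generated by the four binomials X_1·X_11 − X_3·X_9, X_2·X_12 − X_4·X_10, X_5·X_15 − X_7·X_13 and X_6·X_16 − X_8·X_14. -/
open MvPolynomial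

/-- The additive map `ℕ¹⁶ → ℕ⁸ × ℕ⁸` given by the matrix of the binary marginal
independence model: the `j`-th standard basis vector (0-indexed) is sent to
`(f_{j % 8}, g_{2⌊j/4⌋ + j % 2})` (0-indexed standard basis vectors). -/
def piModel (u : Fin 16 → ℕ) : (Fin 8 → ℕ) × (Fin 8 → ℕ) :=
  (fun s => ∑ j : Fin 16, if (s : ℕ) = (j : ℕ) % 8 then u j else 0,
   fun s => ∑ j : Fin 16, if (s : ℕ) = 2 * ((j : ℕ) / 4) + (j : ℕ) % 2 then u j else 0)

private theorem key_aux {R : Type*} [CommRing R] (x y z w : R) {a b c d a' b' c' d' : ℕ}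
    (hle : a' ≤ a)
    (h1 : a + c = a' + c') (h3 : a + b = a' + b') (h4 : c + d = c' + d') :
    (x*w - y*z) ∣ x^a*y^b*z^c*w^d - x^a'*y^b'*z^c'*w^d' := by
  obtain ⟨n, rfl⟩ := Nat.exists_eq_add_of_le hle
  have hb : b' = b + n := by omega
  have hc : c' = c + n := by omega
  have hd : d = d' + n := by omega
  subst hb; subst hc; subst hd
  have : x^(a'+n)*y^b*z^c*w^(d'+n) - x^a'*y^(b+n)*z^(c+n)*w^d'
      = (x^a'*y^b*z^c*w^d') * ((x*w)^n - (y*z)^n) := by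
    rw [pow_add, pow_add, pow_add, pow_add, mul_pow, mul_pow]; ring
  rw [this]
  exact Dvd.dvd.mul_left (sub_dvd_pow_sub_pow _ _ n) _

private theorem key {R : Type*} [CommRing R] (x y z w : R) {a b c d a' b' c' d' : ℕ}
    (h1 : a + c = a' + c') (h3 : a + b = a' + b') (h4 : c + d = c' + d') :
    (x*w - y*z) ∣ x^a*y^b*z^c*w^d - x^a'*y^b'*z^c'*w^d' := by
  rcases le_total a' a with h | h
  · exact key_aux x y z w h h1 h3 h4
  · have H := key_aux x y z w h h1.symm h3.symm h4.symm
    rw [show x^a*y^b*z^c*w^d - x^a'*y^b'*z^c'*w^d'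
      = -(x^a'*y^b'*z^c'*w^d' - x^a*y^b*z^c*w^d) by ring]
    exact (dvd_neg).mpr H

private theorem prod16 {M : Type*} [CommMonoid M] (f : Fin 16 → M) :
    ∏ j, f j = f 0 * (f 1 * (f 2 * (f 3 * (f 4 * (f 5 * (f 6 * (f 7 * (f 8 *
      (f 9 * (f 10 * (f 11 * (f 12 * (f 13 * (f 14 * f 15)))))))))))))) := by
  simp only [Fin.prod_univ_succ, Fin.prod_univ_zero, mul_one]
  rfl

set_option maxHeartbeats 2000000 in
/-- The toric ideal of the binary marginal independence model equals the ideal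
generated by the four binomials `X₁X₁₁ − X₃X₉`, `X₂X₁₂ − X₄X₁₀`, `X₅X₁₅ − X₇X₁₃`
and `X₆X₁₆ − X₈X₁₄` (variables written here with 0-based indices). -/
theorem statement_9 {k : Type*} [Field k]
    (IA : Ideal (MvPolynomial (Fin 16) k))
    (hIA : IA = Ideal.span {f | ∃ u v : Fin 16 → ℕ, piModel u = piModel v ∧
      f = (∏ i, X i ^ u i) - ∏ i, X i ^ v i}) :
    IA = Ideal.span {X 0 * X 10 - X 2 * X 8, X 1 * X 11 - X 3 * X 9,
      X 4 * X 14 - X 6 * X 12, X 5 * X 15 - X 7 * X 13} := by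
  rw [hIA]
  apply le_antisymm
  · rw [Ideal.span_le]
    rintro f ⟨u, v, hp, rfl⟩
    set J := Ideal.span ({X 0 * X 10 - X 2 * X 8, X 1 * X 11 - X 3 * X 9,
      X 4 * X 14 - X 6 * X 12, X 5 * X 15 - X 7 * X 13} :
        Set (MvPolynomial (Fin 16) k)) with hJ
    show _ ∈ J
    -- extract the 12 needed linear equations
    have F0 := congrFun (congrArg Prod.fst hp) 0
    have F1 := congrFun (congrArg Prod.fst hp) 1
    have F4 := congrFun (congrArg Prod.fst hp) 4
    have F5 := congrFun (congrArg Prod.fst hp) 5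
    have G0 := congrFun (congrArg Prod.snd hp) 0
    have G1 := congrFun (congrArg Prod.snd hp) 1
    have G2 := congrFun (congrArg Prod.snd hp) 2
    have G3 := congrFun (congrArg Prod.snd hp) 3
    have G4 := congrFun (congrArg Prod.snd hp) 4
    have G5 := congrFun (congrArg Prod.snd hp) 5
    have G6 := congrFun (congrArg Prod.snd hp) 6
    have G7 := congrFun (congrArg Prod.snd hp) 7
    simp only [piModel, Fin.sum_univ_succ, Fin.sum_univ_zero,
      show ((2:Fin 8):ℕ)=2 from rfl, show ((3:Fin 8):ℕ)=3 from rfl,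
      show ((4:Fin 8):ℕ)=4 from rfl, show ((5:Fin 8):ℕ)=5 from rfl,
      show ((6:Fin 8):ℕ)=6 from rfl, show ((7:Fin 8):ℕ)=7 from rfl]
      at F0 F1 F4 F5 G0 G1 G2 G3 G4 G5 G6 G7
    norm_num at F0 F1 F4 F5 G0 G1 G2 G3 G4 G5 G6 G7
    have F0' : u 0 + u 8 = v 0 + v 8 := F0
    have F1' : u 1 + u 9 = v 1 + v 9 := F1
    have F4' : u 4 + u 12 = v 4 + v 12 := F4
    have F5' : u 5 + u 13 = v 5 + v 13 := F5
    have G0' : u 0 + u 2 = v 0 + v 2 := G0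
    have G1' : u 1 + u 3 = v 1 + v 3 := G1
    have G2' : u 4 + u 6 = v 4 + v 6 := G2
    have G3' : u 5 + u 7 = v 5 + v 7 := G3
    have G4' : u 8 + u 10 = v 8 + v 10 := G4
    have G5' : u 9 + u 11 = v 9 + v 11 := G5
    have G6' : u 12 + u 14 = v 12 + v 14 := G6
    have G7' : u 13 + u 15 = v 13 + v 15 := G7
    -- divisibility facts for each of the four groups
    obtain ⟨t1, ht1⟩ := key (X 0 : MvPolynomial (Fin 16) k) (X 2) (X 8) (X 10) F0' G0' G4'
    obtain ⟨t2, ht2⟩ := key (X 1 : MvPolynomial (Fin 16) k) (X 3) (X 9) (X 11) F1' G1' G5'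
    obtain ⟨t3, ht3⟩ := key (X 4 : MvPolynomial (Fin 16) k) (X 6) (X 12) (X 14) F4' G2' G6'
    obtain ⟨t4, ht4⟩ := key (X 5 : MvPolynomial (Fin 16) k) (X 7) (X 13) (X 15) F5' G3' G7'
    have hg1 : (X 0 * X 10 - X 2 * X 8 : MvPolynomial (Fin 16) k) ∈ J :=
      Ideal.subset_span (by simp)
    have hg2 : (X 1 * X 11 - X 3 * X 9 : MvPolynomial (Fin 16) k) ∈ J :=
      Ideal.subset_span (by simp)
    have hg3 : (X 4 * X 14 - X 6 * X 12 : MvPolynomial (Fin 16) k) ∈ J :=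
      Ideal.subset_span (by simp)
    have hg4 : (X 5 * X 15 - X 7 * X 13 : MvPolynomial (Fin 16) k) ∈ J :=
      Ideal.subset_span (by simp)
    have hP1 : (X 0^u 0*X 2^u 2*X 8^u 8*X 10^u 10
        - X 0^v 0*X 2^v 2*X 8^v 8*X 10^v 10 : MvPolynomial (Fin 16) k) ∈ J := by
      rw [ht1]; exact Ideal.mul_mem_right _ _ hg1
    have hP2 : (X 1^u 1*X 3^u 3*X 9^u 9*X 11^u 11
        - X 1^v 1*X 3^v 3*X 9^v 9*X 11^v 11 : MvPolynomial (Fin 16) k) ∈ J := by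
      rw [ht2]; exact Ideal.mul_mem_right _ _ hg2
    have hP3 : (X 4^u 4*X 6^u 6*X 12^u 12*X 14^u 14
        - X 4^v 4*X 6^v 6*X 12^v 12*X 14^v 14 : MvPolynomial (Fin 16) k) ∈ J := by
      rw [ht3]; exact Ideal.mul_mem_right _ _ hg3
    have hP4 : (X 5^u 5*X 7^u 7*X 13^u 13*X 15^u 15
        - X 5^v 5*X 7^v 7*X 13^v 13*X 15^v 15 : MvPolynomial (Fin 16) k) ∈ J := by
      rw [ht4]; exact Ideal.mul_mem_right _ _ hg4
    have hu := prod16 (fun i => (X i : MvPolynomial (Fin 16) k) ^ u i)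
    have hv := prod16 (fun i => (X i : MvPolynomial (Fin 16) k) ^ v i)
    rw [hu, hv]
    have main : ((X 0^u 0 * (X 1^u 1 * (X 2^u 2 * (X 3^u 3 * (X 4^u 4 * (X 5^u 5 * (X 6^u 6 * (X 7^u 7 * (X 8^u 8 * (X 9^u 9 * (X 10^u 10 * (X 11^u 11 * (X 12^u 12 * (X 13^u 13 * (X 14^u 14 * X 15^u 15))))))))))))))) -
        (X 0^v 0 * (X 1^v 1 * (X 2^v 2 * (X 3^v 3 * (X 4^v 4 * (X 5^v 5 * (X 6^v 6 * (X 7^v 7 * (X 8^v 8 * (X 9^v 9 * (X 10^v 10 * (X 11^v 11 * (X 12^v 12 * (X 13^v 13 * (X 14^v 14 * X 15^v 15))))))))))))))) : MvPolynomial (Fin 16) k)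
        = (X 0^u 0*X 2^u 2*X 8^u 8*X 10^u 10 - X 0^v 0*X 2^v 2*X 8^v 8*X 10^v 10) * (X 1^u 1*X 3^u 3*X 9^u 9*X 11^u 11) * (X 4^u 4*X 6^u 6*X 12^u 12*X 14^u 14) * (X 5^u 5*X 7^u 7*X 13^u 13*X 15^u 15)
        + (X 0^v 0*X 2^v 2*X 8^v 8*X 10^v 10) * (X 1^u 1*X 3^u 3*X 9^u 9*X 11^u 11 - X 1^v 1*X 3^v 3*X 9^v 9*X 11^v 11) * (X 4^u 4*X 6^u 6*X 12^u 12*X 14^u 14) * (X 5^u 5*X 7^u 7*X 13^u 13*X 15^u 15)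
        + (X 0^v 0*X 2^v 2*X 8^v 8*X 10^v 10) * (X 1^v 1*X 3^v 3*X 9^v 9*X 11^v 11) * (X 4^u 4*X 6^u 6*X 12^u 12*X 14^u 14 - X 4^v 4*X 6^v 6*X 12^v 12*X 14^v 14) * (X 5^u 5*X 7^u 7*X 13^u 13*X 15^u 15)
        + (X 0^v 0*X 2^v 2*X 8^v 8*X 10^v 10) * (X 1^v 1*X 3^v 3*X 9^v 9*X 11^v 11) * (X 4^v 4*X 6^v 6*X 12^v 12*X 14^v 14) * (X 5^u 5*X 7^u 7*X 13^u 13*X 15^u 15 - X 5^v 5*X 7^v 7*X 13^v 13*X 15^v 15) := by ring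
    rw [main]
    refine add_mem (add_mem (add_mem ?_ ?_) ?_) ?_
    · exact Ideal.mul_mem_right _ _ (Ideal.mul_mem_right _ _ (Ideal.mul_mem_right _ _ hP1))
    · exact Ideal.mul_mem_right _ _ (Ideal.mul_mem_right _ _ (Ideal.mul_mem_left _ _ hP2))
    · exact Ideal.mul_mem_right _ _ (Ideal.mul_mem_left _ _ hP3)
    · exact Ideal.mul_mem_left _ _ hP4
  · rw [Ideal.span_le]
    intro f hf
    apply Ideal.subset_span
    simp only [Set.mem_insert_iff, Set.mem_singleton_iff] at hf
    rcases hf with rfl | rfl | rfl | rfl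
    · exact ⟨![1,0,0,0,0,0,0,0,0,0,1,0,0,0,0,0], ![0,0,1,0,0,0,0,0,1,0,0,0,0,0,0,0],
        by decide, by simp [Fin.prod_univ_succ]; try rfl⟩
    · exact ⟨![0,1,0,0,0,0,0,0,0,0,0,1,0,0,0,0], ![0,0,0,1,0,0,0,0,0,1,0,0,0,0,0,0],
        by decide, by simp [Fin.prod_univ_succ]; try rfl⟩
    · exact ⟨![0,0,0,0,1,0,0,0,0,0,0,0,0,0,1,0], ![0,0,0,0,0,0,1,0,0,0,0,0,1,0,0,0],
        by decide, by simp [Fin.prod_univ_succ]; try rfl⟩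
    · exact ⟨![0,0,0,0,0,1,0,0,0,0,0,0,0,0,0,1], ![0,0,0,0,0,0,0,1,0,0,0,0,0,1,0,0],
        by decide, by simp [Fin.prod_univ_succ]; try rfl⟩
end
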